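/- Fix 0 ≤ μ < 1, and let g(x) denote the spectral radius of the polynomial z^2 - ((1+μ) - x) z + μ (the maximum modulus of its two complex roots). Then for any interval [a, b] ⊆ ℝ, the maximum of g over [a, b] is attained at an endpoint: max_{x ∈ [a,b]} g(x) = max(g(a), g(b)). -/

import Mathlib

/-- Spectral radius of the heavy-ball iteration: the maximum modulus of the two
roots `a/2 ± sqrt((a/2)^2 - μ)` of `z^2 - a z + μ`, `a = (1+μ) - x`. -/
noncomputable def hbRad (μ x : ℝ) : ℝ :=
  max (‖(((1 + μ) - x : ℝ) : ℂ) / 2 +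
        (((((1 + μ) - x : ℝ) : ℂ) / 2) ^ 2 - (μ : ℂ)) ^ ((1 : ℂ) / 2)‖)
      (‖(((1 + μ) - x : ℝ) : ℂ) / 2 -
        (((((1 + μ) - x : ℝ) : ℂ) / 2) ^ 2 - (μ : ℂ)) ^ ((1 : ℂ) / 2)‖)

noncomputable def hbVal (μ t : ℝ) : ℝ :=
  max (‖(t : ℂ) / 2 + (((t : ℂ) / 2) ^ 2 - (μ : ℂ)) ^ ((1 : ℂ) / 2)‖)
      (‖(t : ℂ) / 2 - (((t : ℂ) / 2) ^ 2 - (μ : ℂ)) ^ ((1 : ℂ) / 2)‖)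

lemma hbRad_eq_hbVal (μ x : ℝ) : hbRad μ x = hbVal μ ((1 + μ) - x) := rfl

lemma cpow_half_neg {d : ℝ} (hd : d < 0) :
    ((d : ℝ) : ℂ) ^ ((1 : ℂ) / 2) = Real.sqrt (-d) * Complex.I := by
  rw [Complex.ofReal_cpow_of_nonpos hd.le]
  have h1 : ((-d : ℝ) : ℂ) ^ ((1 : ℂ) / 2) = ((Real.sqrt (-d) : ℝ) : ℂ) := by
    rw [show ((1 : ℂ) / 2) = ((1 / 2 : ℝ) : ℂ) by norm_num,
      ← Complex.ofReal_cpow (by linarith), Real.sqrt_eq_rpow]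
  have h2 : Complex.exp (↑Real.pi * Complex.I * ((1 : ℂ) / 2)) = Complex.I := by
    rw [show (↑Real.pi * Complex.I * ((1 : ℂ) / 2)) = ((Real.pi / 2 : ℝ) : ℂ) * Complex.I by
        push_cast; ring,
      Complex.exp_mul_I, ← Complex.ofReal_cos, ← Complex.ofReal_sin]
    simp
  rw [show (-(d : ℂ)) = ((-d : ℝ) : ℂ) by push_cast; ring] at *
  rw [h1, h2]

lemma cpow_half_nonneg {d : ℝ} (hd : 0 ≤ d) :
    ((d : ℝ) : ℂ) ^ ((1 : ℂ) / 2) = ((Real.sqrt d : ℝ) : ℂ) := by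
  rw [show ((1 : ℂ) / 2) = ((1 / 2 : ℝ) : ℂ) by norm_num,
    ← Complex.ofReal_cpow hd, Real.sqrt_eq_rpow]

lemma hbVal_eq (μ : ℝ) (hμ0 : 0 ≤ μ) (t : ℝ) :
    hbVal μ t = if t ^ 2 / 4 - μ < 0 then Real.sqrt μ
      else |t| / 2 + Real.sqrt (t ^ 2 / 4 - μ) := by
  have hcast : ((t : ℂ) / 2) ^ 2 - (μ : ℂ) = ((t ^ 2 / 4 - μ : ℝ) : ℂ) := by
    push_cast; ring
  set d : ℝ := t ^ 2 / 4 - μ with hdd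
  rw [hbVal, hcast]
  split_ifs with hd
  · rw [cpow_half_neg hd]
    have habs1 : ‖(t : ℂ) / 2 + ↑(Real.sqrt (-d)) * Complex.I‖
        = Real.sqrt ((t / 2) ^ 2 + Real.sqrt (-d) ^ 2) := by
      rw [show (t : ℂ) / 2 = ((t / 2 : ℝ) : ℂ) by push_cast; ring, Complex.norm_add_mul_I]
    have habs2 : ‖(t : ℂ) / 2 - ↑(Real.sqrt (-d)) * Complex.I‖
        = Real.sqrt ((t / 2) ^ 2 + (-Real.sqrt (-d)) ^ 2) := by
      rw [show (t : ℂ) / 2 - ↑(Real.sqrt (-d)) * Complex.I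
          = ((t / 2 : ℝ) : ℂ) + ((-Real.sqrt (-d) : ℝ) : ℂ) * Complex.I by push_cast; ring,
        Complex.norm_add_mul_I]
    have hsq : Real.sqrt (-d) ^ 2 = -d := Real.sq_sqrt (by linarith)
    rw [habs1, habs2]
    have : (t / 2) ^ 2 + Real.sqrt (-d) ^ 2 = μ := by
      rw [hsq]; rw [hdd]; ring
    rw [neg_sq, hsq, show (t / 2) ^ 2 + -d = μ by rw [hdd]; ring]
    simp
  · push_neg at hd
    rw [cpow_half_nonneg hd]
    have h1 : ‖(t : ℂ) / 2 + ↑(Real.sqrt d)‖ = |t / 2 + Real.sqrt d| := by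
      rw [show (t : ℂ) / 2 + ↑(Real.sqrt d) = ((t / 2 + Real.sqrt d : ℝ) : ℂ) by push_cast; ring,
        Complex.norm_real, Real.norm_eq_abs]
    have h2 : ‖(t : ℂ) / 2 - ↑(Real.sqrt d)‖ = |t / 2 - Real.sqrt d| := by
      rw [show (t : ℂ) / 2 - ↑(Real.sqrt d) = ((t / 2 - Real.sqrt d : ℝ) : ℂ) by push_cast; ring,
        Complex.norm_real, Real.norm_eq_abs]
    rw [h1, h2]
    have hs : 0 ≤ Real.sqrt d := Real.sqrt_nonneg d
    rcases le_or_gt 0 t with ht | ht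
    · rw [abs_of_nonneg ht]
      have e1 : |t / 2 + Real.sqrt d| = t / 2 + Real.sqrt d := abs_of_nonneg (by linarith)
      have e2 : |t / 2 - Real.sqrt d| ≤ t / 2 + Real.sqrt d := by
        rw [abs_sub_le_iff]; constructor <;> linarith
      rw [e1, max_eq_left e2]
    · rw [abs_of_neg ht]
      have e1 : |t / 2 - Real.sqrt d| = -t / 2 + Real.sqrt d := by
        rw [abs_of_nonpos (by linarith)]; ring
      have e2 : |t / 2 + Real.sqrt d| ≤ -t / 2 + Real.sqrt d := by
        rw [abs_le]; constructor <;> linarith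
      rw [e1, max_eq_right e2]

lemma hbVal_mono (μ : ℝ) (hμ0 : 0 ≤ μ) {s t : ℝ} (h : |s| ≤ |t|) :
    hbVal μ s ≤ hbVal μ t := by
  rw [hbVal_eq μ hμ0, hbVal_eq μ hμ0]
  have hsq : s ^ 2 ≤ t ^ 2 := by
    rw [← sq_abs s, ← sq_abs t]; exact pow_le_pow_left₀ (abs_nonneg s) h 2
  split_ifs with h1 h2 h2
  · exact le_refl _
  · push_neg at h2
    have hμt : Real.sqrt μ ≤ |t| / 2 := by
      have h3 : Real.sqrt μ ≤ Real.sqrt (t ^ 2 / 4) := Real.sqrt_le_sqrt (by linarith)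
      have heq : Real.sqrt (t ^ 2 / 4) = |t| / 2 := by
        rw [show t ^ 2 / 4 = (|t| / 2) ^ 2 by rw [← sq_abs t]; ring,
          Real.sqrt_sq (by positivity)]
      linarith
    linarith [Real.sqrt_nonneg (t ^ 2 / 4 - μ)]
  · exfalso; push_neg at h1; linarith
  · push_neg at h1 h2
    have h3 : Real.sqrt (s ^ 2 / 4 - μ) ≤ Real.sqrt (t ^ 2 / 4 - μ) :=
      Real.sqrt_le_sqrt (by linarith)
    have h4 : |s| / 2 ≤ |t| / 2 := by linarith
    linarith

/-- The maximum of the heavy-ball spectral radius over an interval `[a,b]`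
is attained at an endpoint. -/
theorem stmt_7 (μ : ℝ) (hμ0 : 0 ≤ μ) (hμ1 : μ < 1) (a b : ℝ) (hab : a ≤ b) :
    IsGreatest (hbRad μ '' Set.Icc a b) (max (hbRad μ a) (hbRad μ b)) := by
  constructor
  · rcases le_total (hbRad μ a) (hbRad μ b) with h | h
    · rw [max_eq_right h]
      exact ⟨b, ⟨hab, le_refl b⟩, rfl⟩
    · rw [max_eq_left h]
      exact ⟨a, ⟨le_refl a, hab⟩, rfl⟩
  · rintro y ⟨x, ⟨hax, hxb⟩, rfl⟩
    rw [hbRad_eq_hbVal, hbRad_eq_hbVal, hbRad_eq_hbVal]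
    have habs : |(1 + μ) - x| ≤ max |(1 + μ) - a| |(1 + μ) - b| := by
      have h1 : (1 + μ) - b ≤ (1 + μ) - x := by linarith
      have h2 : (1 + μ) - x ≤ (1 + μ) - a := by linarith
      rcases abs_le_max_abs_abs h1 h2 with h
      exact h.trans_eq (max_comm _ _)
    rcases le_max_iff.mp habs with h | h
    · exact le_max_of_le_left (hbVal_mono μ hμ0 h)
    · exact le_max_of_le_right (hbVal_mono μ hμ0 h)
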